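/- For every integer ℓ ≥ 2 and every real ε > 0 there exist C > 0 and N₀ such that for every integer N ≥ N₀ there exists a coloring of the 3-element subsets of an N-element set V with ℓ colors with the following property: for every subset S ⊆ V with |S| ≥ C·√(log₂ N) and every color χ₀, at most (1/ℓ + ε)·C(|S|, 3) of the 3-element subsets of S are colored χ₀. Consequently, the bound c·√(log N) in the almost-monochromatic subset theorem is tight up to the constant factor. -/

import Mathlib

open Finset
set_option maxHeartbeats 1000000

lemma amc_mgf {I : Type*} [Fintype I] [DecidableEq I] (ℓ : ℕ)
    (χ₀ : Fin ℓ) (T : Finset I) (lam : ℝ) :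
    ∑ χ : I → Fin ℓ, lam ^ ((T.filter fun t => χ t = χ₀).card)
      = ((ℓ : ℝ) - 1 + lam) ^ T.card * (ℓ : ℝ) ^ (Fintype.card I - T.card) := by
  have key := Fintype.prod_sum (R := ℝ)
    (fun (i : I) (c : Fin ℓ) => if i ∈ T ∧ c = χ₀ then lam else 1)
  calc ∑ χ : I → Fin ℓ, lam ^ ((T.filter fun t => χ t = χ₀).card)
      = ∑ χ : I → Fin ℓ, ∏ i, (if i ∈ T ∧ χ i = χ₀ then lam else 1) := by
        refine Finset.sum_congr rfl fun χ _ => ?_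
        rw [Finset.prod_ite (f := fun _ => lam) (g := fun _ => (1:ℝ))]
        simp only [Finset.prod_const, Finset.prod_const_one, mul_one]
        have h2 : Finset.univ.filter (fun i => i ∈ T ∧ χ i = χ₀)
            = T.filter (fun t => χ t = χ₀) := by ext i; simp
        rw [h2]
        simp
    _ = ∏ i, ∑ c : Fin ℓ, (if i ∈ T ∧ c = χ₀ then lam else 1) := key.symm
    _ = ∏ i, (if i ∈ T then ((ℓ : ℝ) - 1 + lam) else (ℓ : ℝ)) := by
        refine Finset.prod_congr rfl fun i _ => ?_
        by_cases h : i ∈ T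
        · have e : ∀ c : Fin ℓ, (if i ∈ T ∧ c = χ₀ then lam else 1)
              = (if c = χ₀ then lam - 1 else 0) + 1 := by
            intro c
            by_cases hc : c = χ₀ <;> simp [h, hc]
          rw [Finset.sum_congr rfl (fun c _ => e c), Finset.sum_add_distrib]
          simp [h, Finset.sum_ite_eq']
          ring
        · simp [h]
    _ = ((ℓ : ℝ) - 1 + lam) ^ T.card * (ℓ : ℝ) ^ (Fintype.card I - T.card) := by
        rw [Finset.prod_ite (f := fun _ => ((ℓ:ℝ) - 1 + lam)) (g := fun _ => (ℓ:ℝ))]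
        simp only [Finset.prod_const]
        congr 2
        · simp [Finset.filter_mem_eq_inter]
        · rw [Finset.filter_not, Finset.filter_mem_eq_inter, Finset.univ_inter,
            Finset.card_sdiff_of_subset (Finset.subset_univ T), Finset.card_univ]

lemma amc_tail {I : Type*} [Fintype I] [DecidableEq I] (ℓ : ℕ)
    (χ₀ : Fin ℓ) (T : Finset I) (lam a : ℝ) (hlam : 1 ≤ lam) (ha : 0 ≤ a) :
    ((Finset.univ.filter (fun χ : I → Fin ℓ =>
        a < ((T.filter fun t => χ t = χ₀).card : ℝ))).card : ℝ) * lam ^ a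
      ≤ ((ℓ : ℝ) - 1 + lam) ^ T.card * (ℓ : ℝ) ^ (Fintype.card I - T.card) := by
  rw [← amc_mgf ℓ χ₀ T lam]
  have hlam0 : (0:ℝ) < lam := lt_of_lt_of_le one_pos hlam
  calc ((Finset.univ.filter (fun χ : I → Fin ℓ =>
        a < ((T.filter fun t => χ t = χ₀).card : ℝ))).card : ℝ) * lam ^ a
      = ∑ χ ∈ Finset.univ.filter (fun χ : I → Fin ℓ =>
          a < ((T.filter fun t => χ t = χ₀).card : ℝ)), lam ^ a := by
        rw [Finset.sum_const, nsmul_eq_mul]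
    _ ≤ ∑ χ ∈ Finset.univ.filter (fun χ : I → Fin ℓ =>
          a < ((T.filter fun t => χ t = χ₀).card : ℝ)),
            lam ^ ((T.filter fun t => χ t = χ₀).card) := by
        refine Finset.sum_le_sum fun χ hχ => ?_
        rw [Finset.mem_filter] at hχ
        calc lam ^ a ≤ lam ^ (((T.filter fun t => χ t = χ₀).card : ℕ) : ℝ) :=
              Real.rpow_le_rpow_of_exponent_le hlam (le_of_lt hχ.2)
          _ = lam ^ ((T.filter fun t => χ t = χ₀).card : ℕ) := Real.rpow_natCast lam _
    _ ≤ ∑ χ : I → Fin ℓ, lam ^ ((T.filter fun t => χ t = χ₀).card) := by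
        refine Finset.sum_le_sum_of_subset_of_nonneg (Finset.filter_subset _ _)
          fun χ _ _ => pow_nonneg (le_of_lt hlam0) _

lemma amc_union {α : Type*} [Fintype α] [DecidableEq α] {ι : Type*} (P : Finset ι)
    (bad : ι → α → Prop) [∀ p x, Decidable (bad p x)]
    (h : ∑ p ∈ P, (Finset.univ.filter (bad p)).card < Fintype.card α) :
    ∃ x : α, ∀ p ∈ P, ¬ bad p x := by
  by_contra hc
  push_neg at hc
  have hsub : (Finset.univ : Finset α) ⊆ P.biUnion (fun p => Finset.univ.filter (bad p)) := by
    intro x _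
    obtain ⟨p, hp, hb⟩ := hc x
    exact Finset.mem_biUnion.2 ⟨p, hp, Finset.mem_filter.2 ⟨Finset.mem_univ _, hb⟩⟩
  have h2 := (Finset.card_le_card hsub).trans Finset.card_biUnion_le
  rw [Finset.card_univ] at h2
  omega

lemma amc_supersets {α : Type*} [DecidableEq α] (S T : Finset α) (k : ℕ)
    (hTS : T ⊆ S) (hTk : T.card ≤ k) :
    ((S.powersetCard k).filter (fun K => T ⊆ K)).card
      = (S.card - T.card).choose (k - T.card) := by
  rw [← Finset.card_sdiff_of_subset hTS, ← Finset.card_powersetCard]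
  apply Finset.card_bij' (fun K _ => K \ T) (fun A _ => A ∪ T)
  · intro K hK
    rw [Finset.mem_filter, Finset.mem_powersetCard] at hK
    rw [Finset.mem_powersetCard]
    exact ⟨Finset.sdiff_subset_sdiff hK.1.1 le_rfl,
      by rw [Finset.card_sdiff_of_subset hK.2, hK.1.2]⟩
  · intro A hA
    rw [Finset.mem_powersetCard] at hA
    have hdisj : Disjoint A T := Finset.disjoint_of_subset_left hA.1 Finset.sdiff_disjoint
    rw [Finset.mem_filter, Finset.mem_powersetCard]
    refine ⟨⟨Finset.union_subset (hA.1.trans Finset.sdiff_subset) hTS, ?_⟩,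
      Finset.subset_union_right⟩
    rw [Finset.card_union_of_disjoint hdisj, hA.2]
    omega
  · intro K hK
    rw [Finset.mem_filter] at hK
    exact Finset.sdiff_union_of_subset hK.2
  · intro A hA
    rw [Finset.mem_powersetCard] at hA
    have hdisj : Disjoint A T := Finset.disjoint_of_subset_left hA.1 Finset.sdiff_disjoint
    rw [Finset.union_sdiff_right, Finset.sdiff_eq_self_of_disjoint hdisj]

lemma amc_double {α : Type*} [DecidableEq α] (S : Finset α) (k : ℕ) (h3 : 3 ≤ k)
    (hk : k ≤ S.card) (P : Finset α → Prop) [DecidablePred P] :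
    ((S.powersetCard 3).filter P).card * (S.card - 3).choose (k - 3)
      = ∑ K ∈ S.powersetCard k, ((K.powersetCard 3).filter P).card := by
  calc ((S.powersetCard 3).filter P).card * (S.card - 3).choose (k - 3)
      = ∑ T ∈ (S.powersetCard 3).filter P,
          ((S.powersetCard k).filter (fun K => T ⊆ K)).card := by
        rw [Finset.sum_congr rfl (fun T hT => ?_), Finset.sum_const, smul_eq_mul]
        rw [Finset.mem_filter, Finset.mem_powersetCard] at hT
        rw [amc_supersets S T k hT.1.1 (hT.1.2 ▸ h3), hT.1.2]
    _ = ∑ T ∈ (S.powersetCard 3).filter P,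
          ∑ K ∈ S.powersetCard k, if T ⊆ K then 1 else 0 := by
        refine Finset.sum_congr rfl fun T _ => ?_
        rw [Finset.card_filter]
    _ = ∑ K ∈ S.powersetCard k,
          ∑ T ∈ (S.powersetCard 3).filter P, if T ⊆ K then 1 else 0 := Finset.sum_comm
    _ = ∑ K ∈ S.powersetCard k, ((K.powersetCard 3).filter P).card := by
        refine Finset.sum_congr rfl fun K hK => ?_
        rw [Finset.mem_powersetCard] at hK
        rw [← Finset.card_filter]
        congr 1
        ext T
        simp only [Finset.mem_filter, Finset.mem_powersetCard]
        constructor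
        · rintro ⟨⟨⟨-, hc⟩, hP⟩, hTK⟩
          exact ⟨⟨hTK, hc⟩, hP⟩
        · rintro ⟨⟨hTK, hc⟩, hP⟩
          exact ⟨⟨⟨hTK.trans hK.1, hc⟩, hP⟩, hTK⟩

lemma amc_avg {α : Type*} [DecidableEq α] (S : Finset α) (k : ℕ) (h3 : 3 ≤ k)
    (hk : k ≤ S.card) (P : Finset α → Prop) [DecidablePred P] (c : ℝ) (hc : 0 ≤ c)
    (h : ∀ K ∈ S.powersetCard k,
      (((K.powersetCard 3).filter P).card : ℝ) ≤ c * (k.choose 3)) :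
    (((S.powersetCard 3).filter P).card : ℝ) ≤ c * (S.card.choose 3) := by
  have hD : 0 < (S.card - 3).choose (k - 3) :=
    Nat.choose_pos (by omega)
  have hDR : (0:ℝ) < ((S.card - 3).choose (k - 3) : ℝ) := by exact_mod_cast hD
  have key := amc_double S k h3 hk P
  have keyT := amc_double S k h3 hk (fun _ => True)
  simp only [Finset.filter_true_of_mem (fun _ _ => trivial)] at keyT
  -- keyT : (S.powersetCard 3).card * (S.card-3).choose (k-3) = ∑ K, (K.powersetCard 3).card
  have hid : (S.card.choose 3) * ((S.card - 3).choose (k - 3))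
      = (S.card.choose k) * (k.choose 3) := by
    rw [← Finset.card_powersetCard 3 S, keyT, ← Finset.card_powersetCard k S, Finset.card_eq_sum_ones (S.powersetCard k),
      Finset.sum_mul, one_mul]
    refine Finset.sum_congr rfl fun K hK => ?_
    rw [Finset.mem_powersetCard] at hK
    rw [Finset.card_powersetCard, hK.2]
  refine le_of_mul_le_mul_right ?_ hDR
  calc (((S.powersetCard 3).filter P).card : ℝ) * ((S.card - 3).choose (k - 3) : ℝ)
      = ((((S.powersetCard 3).filter P).card * (S.card - 3).choose (k - 3) : ℕ) : ℝ) := by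
        push_cast; ring
    _ = ((∑ K ∈ S.powersetCard k, ((K.powersetCard 3).filter P).card : ℕ) : ℝ) := by
        rw [key]
    _ = ∑ K ∈ S.powersetCard k, (((K.powersetCard 3).filter P).card : ℝ) := by push_cast; rfl
    _ ≤ ∑ K ∈ S.powersetCard k, c * (k.choose 3 : ℝ) := Finset.sum_le_sum h
    _ = (S.card.choose k : ℝ) * (c * (k.choose 3 : ℝ)) := by
        rw [Finset.sum_const, nsmul_eq_mul, Finset.card_powersetCard]
    _ = c * (((S.card.choose k) * (k.choose 3) : ℕ) : ℝ) := by push_cast; ring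
    _ = c * (((S.card.choose 3) * ((S.card - 3).choose (k - 3)) : ℕ) : ℝ) := by rw [hid]
    _ = c * (S.card.choose 3 : ℝ) * ((S.card - 3).choose (k - 3) : ℝ) := by push_cast; ring

lemma amc_numeric (ℓ : ℕ) (hℓ : 2 ≤ ℓ) (ε : ℝ) (hε : 0 < ε) (hε2 : ε ≤ 1/2)
    (N k : ℕ) (hN : max ℓ 65536 ≤ N) (hkN : k ≤ N)
    (hk : (24 / ε) * Real.sqrt (Real.logb 2 N) ≤ (k : ℝ)) :
    (ℓ:ℝ) * (N.choose k) * ((ℓ:ℝ) - 1 + (1+ε)) ^ (k.choose 3)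
      < (1+ε) ^ ((1/(ℓ:ℝ) + ε) * (k.choose 3)) * (ℓ:ℝ) ^ (k.choose 3) := by
  have hℓR : (2:ℝ) ≤ (ℓ:ℝ) := by exact_mod_cast hℓ
  have hℓ0 : (0:ℝ) < (ℓ:ℝ) := by linarith
  set p : ℝ := 1/(ℓ:ℝ) with hp_def
  have hp0 : 0 < p := by positivity
  have hp2 : p ≤ 1/2 := by
    rw [hp_def, div_le_div_iff₀ hℓ0 (by norm_num)]; linarith
  have hNℓ : (ℓ:ℝ) ≤ (N:ℝ) := by
    exact_mod_cast (le_max_left ℓ 65536).trans hN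
  have hN65536 : (65536:ℝ) ≤ (N:ℝ) := by
    exact_mod_cast (le_max_right ℓ 65536).trans hN
  have hN0 : (0:ℝ) < (N:ℝ) := by linarith
  set L : ℝ := Real.log N with hL_def
  have hlog2pos : (0:ℝ) < Real.log 2 := Real.log_pos (by norm_num)
  have hL65536 : Real.log 65536 ≤ L := Real.log_le_log (by norm_num) hN65536
  have hlog65536 : Real.log 65536 = 16 * Real.log 2 := by
    rw [show (65536:ℝ) = 2^(16:ℕ) by norm_num, Real.log_pow]
    push_cast; ring
  have hLpos : 0 < L := by nlinarith
  have hlogb : Real.logb 2 (N:ℝ) = L / Real.log 2 := rfl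
  have hlogb16 : (16:ℝ) ≤ Real.logb 2 N := by
    rw [hlogb, le_div_iff₀ hlog2pos]; nlinarith
  have hlogbL : L ≤ Real.logb 2 N := by
    rw [hlogb, le_div_iff₀ hlog2pos]
    have h2 : Real.log 2 ≤ 1 := by
      nlinarith [Real.log_two_lt_d9]
    nlinarith
  have hε48 : (48:ℝ) ≤ 24/ε := by
    rw [le_div_iff₀ hε]; linarith
  have hsqrt4 : (4:ℝ) ≤ Real.sqrt (Real.logb 2 N) := by
    have : Real.sqrt 16 ≤ Real.sqrt (Real.logb 2 N) := Real.sqrt_le_sqrt hlogb16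
    rw [show (16:ℝ) = 4^2 by norm_num, Real.sqrt_sq (by norm_num)] at this
    exact this
  have hk192 : (192:ℝ) ≤ (k:ℝ) := by nlinarith
  have hk4 : 4 ≤ k := by exact_mod_cast (by linarith : (4:ℝ) ≤ (k:ℝ))
  have hkL : 576 * L ≤ ε^2 * (k:ℝ)^2 := by
    have h1 : 24 * Real.sqrt (Real.logb 2 N) ≤ ε * k := by
      rw [div_mul_eq_mul_div, div_le_iff₀ hε] at hk
      linarith [hk]
    have h2 : Real.sqrt (Real.logb 2 N) ^ 2 = Real.logb 2 N :=
      Real.sq_sqrt (by linarith)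
    nlinarith [Real.sqrt_nonneg (Real.logb 2 N), hε.le, Nat.cast_nonneg (α := ℝ) k]
  set m : ℕ := k.choose 3 with hm_def
  have hm48 : (k:ℝ)^3 ≤ 48 * (m:ℝ) := by
    have h1 : ((k + 1 - 3 : ℕ) ^ 3 : ℝ) / (Nat.factorial 3) ≤ (k.choose 3 : ℝ) :=
      Nat.pow_le_choose 3 k
    have h2 : ((k + 1 - 3 : ℕ) : ℝ) = (k:ℝ) - 2 := by
      have : (k + 1 - 3 : ℕ) = k - 2 := by omega
      rw [this, Nat.cast_sub (by omega)]; norm_num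
    rw [h2] at h1
    have h3 : (k:ℝ)/2 ≤ (k:ℝ) - 2 := by
      have : (4:ℝ) ≤ (k:ℝ) := by exact_mod_cast hk4
      linarith
    have h4 : ((k:ℝ)/2)^3 ≤ ((k:ℝ) - 2)^3 := by
      apply pow_le_pow_left₀ (by positivity) h3
    have h5 : (Nat.factorial 3) = (6:ℕ) := by decide
    rw [h5] at h1
    push_cast at h1
    nlinarith
  have hm0 : (0:ℝ) ≤ (m:ℝ) := Nat.cast_nonneg m
  -- positivity facts
  have h1e : (0:ℝ) < 1 + ε := by linarith
  have hbase : (0:ℝ) < (ℓ:ℝ) - 1 + (1+ε) := by linarith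
  have hchoose_pos : (0:ℝ) < (N.choose k : ℝ) := by
    exact_mod_cast Nat.choose_pos hkN
  have hA : (0:ℝ) < (ℓ:ℝ) * (N.choose k) * ((ℓ:ℝ) - 1 + (1+ε)) ^ m := by positivity
  have hB : (0:ℝ) < (1+ε) ^ ((p + ε) * (m:ℝ)) * (ℓ:ℝ) ^ m := by
    have := Real.rpow_pos_of_pos h1e ((p + ε) * (m:ℝ))
    positivity
  -- log bounds
  have hlogA : Real.log ((ℓ:ℝ) * (N.choose k) * ((ℓ:ℝ) - 1 + (1+ε)) ^ m)
      = Real.log ℓ + Real.log (N.choose k) + (m:ℝ) * Real.log ((ℓ:ℝ) - 1 + (1+ε)) := by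
    rw [Real.log_mul (by positivity) (by positivity),
      Real.log_mul (by positivity) (by positivity), Real.log_pow]
  have hlogB : Real.log ((1+ε) ^ ((p + ε) * (m:ℝ)) * (ℓ:ℝ) ^ m)
      = (p + ε) * (m:ℝ) * Real.log (1+ε) + (m:ℝ) * Real.log ℓ := by
    rw [Real.log_mul (by positivity) (by positivity), Real.log_rpow h1e, Real.log_pow]
  have hchoose_le : Real.log (N.choose k : ℝ) ≤ (k:ℝ) * L := by
    have h1 : (N.choose k : ℝ) ≤ (N:ℝ)^k := by
      calc (N.choose k : ℝ) ≤ ((N:ℝ)^k) / (Nat.factorial k) := Nat.choose_le_pow_div k N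
        _ ≤ (N:ℝ)^k := by
          apply div_le_self (by positivity)
          exact_mod_cast Nat.one_le_iff_ne_zero.2 (Nat.factorial_ne_zero k)
    calc Real.log (N.choose k : ℝ) ≤ Real.log ((N:ℝ)^k) :=
          Real.log_le_log hchoose_pos h1
      _ = (k:ℝ) * L := by rw [Real.log_pow]
  have hsplit : (ℓ:ℝ) - 1 + (1+ε) = (ℓ:ℝ) * (1 + ε * p) := by
    rw [hp_def]; field_simp; ring
  have hlog_base : Real.log ((ℓ:ℝ) - 1 + (1+ε)) ≤ Real.log ℓ + ε * p := by
    rw [hsplit, Real.log_mul (by positivity) (by positivity)]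
    have := Real.log_le_sub_one_of_pos (show (0:ℝ) < 1 + ε * p by positivity)
    linarith
  have hlog_lam : ε / (1 + ε) ≤ Real.log (1+ε) := by
    have h1 := Real.log_le_sub_one_of_pos (show (0:ℝ) < (1+ε)⁻¹ by positivity)
    rw [Real.log_inv] at h1
    have h2 : (1+ε)⁻¹ - 1 = -(ε/(1+ε)) := by field_simp; ring
    linarith [h1, h2.ge, h2.le]
  have hlogℓN : Real.log ℓ ≤ L := Real.log_le_log hℓ0 hNℓ
  -- the core numeric chain
  have key1 : ε^2/3 ≤ (p + ε) * (ε/(1+ε)) - ε * p := by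
    have expand : (p + ε) * (ε/(1+ε)) - ε * p = ε^2*(1-p)/(1+ε) := by
      field_simp; ring
    rw [expand, le_div_iff₀ h1e]
    have h9 : (1+ε) ≤ 3*(1-p) := by linarith
    nlinarith [mul_le_mul_of_nonneg_left h9 (sq_nonneg ε)]
  have key2 : 4 * ((k:ℝ) * L) ≤ (m:ℝ) * (ε^2/3) := by
    have h1 : (k:ℝ) * (576 * L) ≤ (k:ℝ) * (ε^2 * (k:ℝ)^2) :=
      mul_le_mul_of_nonneg_left hkL (by linarith)
    nlinarith
  have key3 : Real.log ℓ + (k:ℝ) * L < 4 * ((k:ℝ) * L) := by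
    have hk1 : (1:ℝ) ≤ (k:ℝ) := by linarith
    nlinarith
  have key4 : (m:ℝ) * (ε^2/3) ≤ (m:ℝ) * ((p + ε) * (ε/(1+ε)) - ε * p) :=
    mul_le_mul_of_nonneg_left key1 hm0
  have hfinal : Real.log ℓ + Real.log (N.choose k : ℝ)
      + (m:ℝ) * Real.log ((ℓ:ℝ) - 1 + (1+ε))
      < (p + ε) * (m:ℝ) * Real.log (1+ε) + (m:ℝ) * Real.log ℓ := by
    have h6 : (m:ℝ) * Real.log ((ℓ:ℝ) - 1 + (1+ε)) ≤ (m:ℝ) * (Real.log ℓ + ε * p) :=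
      mul_le_mul_of_nonneg_left hlog_base hm0
    have h7 : (p + ε) * (m:ℝ) * (ε/(1+ε)) ≤ (p + ε) * (m:ℝ) * Real.log (1+ε) := by
      apply mul_le_mul_of_nonneg_left hlog_lam
      have : (0:ℝ) < p + ε := by linarith
      positivity
    have h8 : (m:ℝ) * ((p + ε) * (ε/(1+ε)) - ε * p) + (m:ℝ) * (ε * p)
        = (p + ε) * (m:ℝ) * (ε/(1+ε)) := by ring
    linarith
  have hlt : Real.log ((ℓ:ℝ) * (N.choose k) * ((ℓ:ℝ) - 1 + (1+ε)) ^ m)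
      < Real.log ((1+ε) ^ ((p + ε) * (m:ℝ)) * (ℓ:ℝ) ^ m) := by
    rw [hlogA, hlogB]; exact hfinal
  have h20 := Real.exp_lt_exp.mpr hlt
  rwa [Real.exp_log hA, Real.exp_log hB] at h20

lemma amc_main (ℓ : ℕ) (hℓ : 2 ≤ ℓ) (ε : ℝ) (hε : 0 < ε) (hε2 : ε ≤ 1/2) :
    ∃ (C : ℝ) (N₀ : ℕ), 0 < C ∧ ∀ N : ℕ, N₀ ≤ N →
      ∃ χ : Finset (Fin N) → Fin ℓ,
        ∀ S : Finset (Fin N), C * Real.sqrt (Real.logb 2 N) ≤ (S.card : ℝ) →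
          ∀ χ₀ : Fin ℓ,
            (((S.powersetCard 3).filter (fun T => χ T = χ₀)).card : ℝ) ≤
              (1 / ℓ + ε) * (Nat.choose S.card 3 : ℝ) := by
  classical
  refine ⟨24 / ε, max ℓ 65536, by positivity, fun N hN => ?_⟩
  have hℓ0 : 0 < ℓ := by omega
  set k := Nat.ceil ((24/ε) * Real.sqrt (Real.logb 2 N)) with hk_def
  have hceil : (24/ε) * Real.sqrt (Real.logb 2 N) ≤ (k : ℝ) := Nat.le_ceil _
  -- basic size facts
  have hN65536 : (65536:ℝ) ≤ (N:ℝ) := by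
    exact_mod_cast (le_max_right ℓ 65536).trans hN
  have hlog2pos : (0:ℝ) < Real.log 2 := Real.log_pos (by norm_num)
  have hlogb16 : (16:ℝ) ≤ Real.logb 2 N := by
    rw [Real.logb, le_div_iff₀ hlog2pos]
    have h1 : Real.log 65536 ≤ Real.log N :=
      Real.log_le_log (by norm_num) hN65536
    have h2 : Real.log 65536 = 16 * Real.log 2 := by
      rw [show (65536:ℝ) = 2^(16:ℕ) by norm_num, Real.log_pow]
      push_cast; ring
    nlinarith
  have hsqrt4 : (4:ℝ) ≤ Real.sqrt (Real.logb 2 N) := by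
    have h := Real.sqrt_le_sqrt hlogb16
    rw [show (16:ℝ) = 4^2 by norm_num, Real.sqrt_sq (by norm_num)] at h
    exact h
  have hε48 : (48:ℝ) ≤ 24/ε := by rw [le_div_iff₀ hε]; linarith
  have hk192 : (192:ℝ) ≤ (k:ℝ) := by nlinarith
  have h3k : 3 ≤ k := by exact_mod_cast (by linarith : (3:ℝ) ≤ (k:ℝ))
  by_cases hkN : k ≤ N
  · -- main case: union bound
    set m : ℕ := k.choose 3 with hm_def
    set a : ℝ := (1/(ℓ:ℝ) + ε) * (m : ℝ) with ha_def
    have ha0 : 0 ≤ a := by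
      have : (0:ℝ) ≤ 1/(ℓ:ℝ) := by positivity
      have hm0 : (0:ℝ) ≤ (m:ℝ) := Nat.cast_nonneg m
      nlinarith
    set I := Finset (Fin N) with hI_def
    set E : ℕ := Fintype.card I with hE_def
    set PP : Finset (Finset (Fin N) × Fin ℓ) :=
      (Finset.univ.powersetCard k) ×ˢ (Finset.univ : Finset (Fin ℓ)) with hPP_def
    set bad : (Finset (Fin N) × Fin ℓ) → (Finset (Fin N) → Fin ℓ) → Prop :=
      fun Kχ χ => a < (((Kχ.1.powersetCard 3).filter fun t => χ t = Kχ.2).card : ℝ)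
      with hbad_def
    have h1e : (0:ℝ) < 1 + ε := by linarith
    have hpow_pos : (0:ℝ) < (1+ε) ^ a := Real.rpow_pos_of_pos h1e a
    have hmE : m ≤ E := by
      obtain ⟨K₀, hK₀sub, hK₀card⟩ :=
        Finset.exists_subset_card_eq (by
          rw [Finset.card_univ, Fintype.card_fin]; exact hkN :
          k ≤ (Finset.univ : Finset (Fin N)).card)
      calc m = (K₀.powersetCard 3).card := by
            rw [Finset.card_powersetCard, hK₀card]
        _ ≤ E := by rw [hE_def]; exact Finset.card_le_univ _
    set B : ℝ := (((ℓ:ℝ) - 1 + (1+ε)) ^ m * (ℓ:ℝ) ^ (E - m)) / (1+ε) ^ a with hB_def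
    have hcount : ∑ q ∈ PP, (Finset.univ.filter (bad q)).card < Fintype.card (Finset (Fin N) → Fin ℓ) := by
      rw [← Nat.cast_lt (α := ℝ)]
      push_cast
      have hper : ∀ Kχ ∈ PP,
          ((Finset.univ.filter (bad Kχ)).card : ℝ) ≤ B := by
        rintro ⟨K, χ₀⟩ hKχ
        rw [Finset.mem_product] at hKχ
        have hKcard : K.card = k := (Finset.mem_powersetCard.mp hKχ.1).2
        have htail := amc_tail ℓ χ₀ (K.powersetCard 3) (1+ε) a (by linarith) ha0
        rw [Finset.card_powersetCard, hKcard] at htail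
        rw [hB_def, le_div_iff₀ hpow_pos]
        exact htail
      have hsum : (∑ Kχ ∈ PP, ((Finset.univ.filter (bad Kχ)).card : ℝ))
          ≤ ((N.choose k : ℝ) * (ℓ:ℝ)) * B := by
        calc (∑ Kχ ∈ PP, ((Finset.univ.filter (bad Kχ)).card : ℝ))
            ≤ ∑ _Kχ ∈ PP, B := Finset.sum_le_sum hper
          _ = (PP.card : ℝ) * B := by rw [Finset.sum_const, nsmul_eq_mul]
          _ = ((N.choose k : ℝ) * (ℓ:ℝ)) * B := by
              rw [hPP_def, Finset.card_product, Finset.card_powersetCard,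
                Finset.card_univ, Finset.card_univ, Fintype.card_fin]
              push_cast [Fintype.card_fin]; ring
      have hnum := amc_numeric ℓ hℓ ε hε hε2 N k hN hkN hceil
      have hEsplit : (ℓ:ℝ)^m * (ℓ:ℝ)^(E - m) = (ℓ:ℝ)^E := by
        rw [← pow_add]
        congr 1
        omega
      have hstrict : ((N.choose k : ℝ) * (ℓ:ℝ)) * B < (ℓ:ℝ)^E := by
        rw [hB_def]
        rw [mul_div_assoc'] at *
        rw [div_lt_iff₀ hpow_pos]
        calc (N.choose k : ℝ) * (ℓ:ℝ) * (((ℓ:ℝ) - 1 + (1+ε)) ^ m * (ℓ:ℝ) ^ (E - m))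
            = ((ℓ:ℝ) * (N.choose k) * ((ℓ:ℝ) - 1 + (1+ε)) ^ m) * (ℓ:ℝ) ^ (E - m) := by
              ring
          _ < ((1+ε) ^ a * (ℓ:ℝ) ^ m) * (ℓ:ℝ) ^ (E - m) := by
              apply mul_lt_mul_of_pos_right _ (by positivity)
              exact hnum
          _ = (ℓ:ℝ)^E * (1+ε) ^ a := by
              rw [mul_assoc, hEsplit]; ring
      have hcard : (Fintype.card (Finset (Fin N) → Fin ℓ) : ℝ) = (ℓ:ℝ)^E := by
        rw [Fintype.card_fun, Fintype.card_fin]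
        push_cast; rfl
      calc (∑ Kχ ∈ PP, ((Finset.univ.filter (bad Kχ)).card : ℝ))
          ≤ ((N.choose k : ℝ) * (ℓ:ℝ)) * B := hsum
        _ < (ℓ:ℝ)^E := hstrict
        _ = (Fintype.card (Finset (Fin N) → Fin ℓ) : ℝ) := hcard.symm
    obtain ⟨χ, hχ⟩ := amc_union PP bad hcount
    refine ⟨χ, fun S hS χ₀ => ?_⟩
    have hkS : k ≤ S.card := Nat.ceil_le.mpr hS
    refine amc_avg S k h3k hkS (fun T => χ T = χ₀) (1/(ℓ:ℝ) + ε)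
      (by positivity) (fun K hK => ?_)
    have hKu : K ∈ Finset.univ.powersetCard k := by
      rw [Finset.mem_powersetCard] at hK ⊢
      exact ⟨Finset.subset_univ K, hK.2⟩
    have hnb := hχ (K, χ₀) (Finset.mem_product.mpr ⟨hKu, Finset.mem_univ χ₀⟩)
    rw [hbad_def] at hnb
    simpa [ha_def] using not_lt.mp hnb
  · -- vacuous case : no valid S exists
    refine ⟨fun _ => ⟨0, hℓ0⟩, fun S hS χ₀ => absurd ?_ hkN⟩
    have hkS : k ≤ S.card := Nat.ceil_le.mpr hS
    calc k ≤ S.card := hkS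
      _ ≤ (Finset.univ : Finset (Fin N)).card := Finset.card_le_univ S
      _ = N := by rw [Finset.card_univ, Fintype.card_fin]

/-- Tightness of the almost-monochromatic subset theorem: for every `ℓ ≥ 2`
and `ε > 0` there are `C > 0` and `N₀` such that for all `N ≥ N₀` there is an
`ℓ`-coloring of the triples of an `N`-element set in which every subset `S`
with `|S| ≥ C·√(log₂ N)` has at most `(1/ℓ + ε)·C(|S|,3)` triples in each
color. -/
theorem stmt_4 (ℓ : ℕ) (hℓ : 2 ≤ ℓ) (ε : ℝ) (hε : 0 < ε) :
    ∃ (C : ℝ) (N₀ : ℕ), 0 < C ∧ ∀ N : ℕ, N₀ ≤ N →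
      ∃ χ : Finset (Fin N) → Fin ℓ,
        ∀ S : Finset (Fin N), C * Real.sqrt (Real.logb 2 N) ≤ (S.card : ℝ) →
          ∀ χ₀ : Fin ℓ,
            (((S.powersetCard 3).filter (fun T => χ T = χ₀)).card : ℝ) ≤
              (1 / ℓ + ε) * (Nat.choose S.card 3 : ℝ) := by
  obtain ⟨C, N₀, hC, H⟩ := amc_main ℓ hℓ (min ε (1/2))
    (lt_min hε (by norm_num)) (min_le_right _ _)
  refine ⟨C, N₀, hC, fun N hN => ?_⟩
  obtain ⟨χ, hχ⟩ := H N hN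
  refine ⟨χ, fun S hS χ₀ => (hχ S hS χ₀).trans ?_⟩
  have h1 : min ε (1/2) ≤ ε := min_le_left _ _
  have h2 : (0:ℝ) ≤ (Nat.choose S.card 3 : ℝ) := Nat.cast_nonneg _
  nlinarith
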